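/- Let μ be a probability measure on a measurable space W, and let ψ₀ : {0,1} × {0,1} × W → ℝ, π : {0,1} × W → ℝ, γ : {0,1} × {0,1} × W → ℝ be measurable with π(x,w) > 0 and γ(m,x,w) > 0 for all arguments. Assume the functions w ↦ Σ_{m∈{0,1}} (ψ₀(1,m,w) − ψ₀(0,m,w))·γ(m,0,w) and w ↦ Σ_{m∈{0,1}} [γ(m,0,w)²/(π(1,w)·γ(m,1,w)) + γ(m,0,w)/π(0,w)] are μ-integrable, with the integral of the latter nonzero. Define λ₀ = 2·[∫ Σ_m (ψ₀(1,m,w) − ψ₀(0,m,w))·γ(m,0,w) dμ(w)] / [∫ Σ_m (γ(m,0,w)²/(π(1,w)γ(m,1,w)) + γ(m,0,w)/π(0,w)) dμ(w)] and ψ*(x,m,w) = ψ₀(x,m,w) − λ₀·[(2x−1)/(2π(x,w))]·[γ(m,0,w)/γ(m,x,w)]. Then ∫ Σ_{m∈{0,1}} (ψ*(1,m,w) − ψ*(0,m,w))·γ(m,0,w) dμ(w) = 0. -/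

import Mathlib

open MeasureTheory

/-- The closed-form Lagrange multiplier `λ₀` makes the natural-direct-effect
constraint vanish for
`ψ*(x,m,w) = ψ₀(x,m,w) - λ₀ [(2x-1)/(2π(x,w))]·[γ(m,0,w)/γ(m,x,w)]` under MSE risk.
Here `x, m ∈ {0,1}` are encoded as `Bool` and `(2x-1)` as `if x then 1 else -1`. -/
theorem nde_constraint_solved_by_closed_form
    {W : Type*} [MeasurableSpace W] (μ : Measure W) [IsProbabilityMeasure μ]
    (ψ₀ : Bool → Bool → W → ℝ) (π : Bool → W → ℝ) (γ : Bool → Bool → W → ℝ)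
    (hψ₀ : ∀ x m, Measurable (ψ₀ x m)) (hπ : ∀ x, Measurable (π x))
    (hγ : ∀ m x, Measurable (γ m x))
    (hπpos : ∀ x w, 0 < π x w) (hγpos : ∀ m x w, 0 < γ m x w)
    (hint₁ : Integrable
      (fun w => ∑ m : Bool, (ψ₀ true m w - ψ₀ false m w) * γ m false w) μ)
    (hint₂ : Integrable
      (fun w => ∑ m : Bool,
        ((γ m false w) ^ 2 / (π true w * γ m true w) + γ m false w / π false w)) μ)
    (hne : (∫ w, (∑ m : Bool,
        ((γ m false w) ^ 2 / (π true w * γ m true w) + γ m false w / π false w)) ∂μ)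
        ≠ 0) :
    let lam₀ : ℝ :=
      2 * (∫ w, (∑ m : Bool, (ψ₀ true m w - ψ₀ false m w) * γ m false w) ∂μ) /
        (∫ w, (∑ m : Bool,
          ((γ m false w) ^ 2 / (π true w * γ m true w) + γ m false w / π false w)) ∂μ)
    let ψs : Bool → Bool → W → ℝ :=
      fun x m w => ψ₀ x m w
        - lam₀ * ((if x then (1 : ℝ) else -1) / (2 * π x w)) * (γ m false w / γ m x w)
    (∫ w, (∑ m : Bool, (ψs true m w - ψs false m w) * γ m false w) ∂μ) = 0 := by
  intro lam₀ ψs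
  set I₁ := ∫ w, (∑ m : Bool, (ψ₀ true m w - ψ₀ false m w) * γ m false w) ∂μ with hI₁
  set I₂ := ∫ w, (∑ m : Bool,
      ((γ m false w) ^ 2 / (π true w * γ m true w) + γ m false w / π false w)) ∂μ with hI₂
  have hkey : (fun w => ∑ m : Bool, (ψs true m w - ψs false m w) * γ m false w)
      = fun w => (∑ m : Bool, (ψ₀ true m w - ψ₀ false m w) * γ m false w)
        - (lam₀ / 2) * ∑ m : Bool,
          ((γ m false w) ^ 2 / (π true w * γ m true w) + γ m false w / π false w) := by
    funext w
    simp only [ψs, Fintype.sum_bool, if_true, if_false, Bool.false_eq_true]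
    have hπ0 := (hπpos false w).ne'
    have hπ1 := (hπpos true w).ne'
    have hγ00 := (hγpos false false w).ne'
    have hγ01 := (hγpos false true w).ne'
    have hγ10 := (hγpos true false w).ne'
    have hγ11 := (hγpos true true w).ne'
    field_simp
    ring
  rw [hkey, integral_sub hint₁ (hint₂.const_mul _), integral_const_mul, ← hI₁, ← hI₂]
  show I₁ - lam₀ / 2 * I₂ = 0
  have : lam₀ = 2 * I₁ / I₂ := rfl
  rw [this]
  field_simp
  ring
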